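/- Let {b(k), b*(k), c(k), c*(k) : k ∈ ℤ} be a locally annihilating bosonic Weyl system on a complex vector space W over S = {b, b*, c, c*} with pairing ⟨b,b*⟩ = ⟨c,c*⟩ = −1, ⟨b*,b⟩ = ⟨c*,c⟩ = 1, and all other pairings 0. Define X⁺(m) := √−1·(:bc*:)(m), X⁻(m) := √−1·(:b*c:)(m), and α(m) := (:bb*:)(m) − (:cc*:)(m). Then for all m, n ∈ ℤ: α(m)X⁺(n) − X⁺(n)α(m) = 2·X⁺(m+n) and α(m)X⁻(n) − X⁻(n)α(m) = −2·X⁻(m+n). (This is the mode form of the relation [α_i(z), x_i^±(w)] = ±(α_i,α_i) x_i^±(w) δ(z−w) with (α_i,α_i) = 2, verified in the proof of Theorem 3.5.) -/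
import Mathlib


noncomputable section

/-- A *bosonic Weyl system* over a set `S` of symbols with pairing `pair : S → S → ℂ`
on a complex vector space `W`: a family of operators `op u k` (`u ∈ S`, `k ∈ ℤ`)
such that `[op u k, op v l] = ⟨u,v⟩ δ_{k+l,0} id`. -/
def IsBosonicWeylSystem {S W : Type*} [AddCommGroup W] [Module ℂ W]
    (pair : S → S → ℂ) (op : S → ℤ → Module.End ℂ W) : Prop :=
  ∀ u v : S, ∀ k l : ℤ,
    op u k * op v l - op v l * op u k =
      if k + l = 0 then pair u v • (1 : Module.End ℂ W) else 0

/-- A family of operators is *locally annihilating* if for every vector `w` and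
every symbol `u`, `op u k w = 0` for all sufficiently large `k`. -/
def LocallyAnnihilating {S W : Type*} [AddCommGroup W] [Module ℂ W]
    (op : S → ℤ → Module.End ℂ W) : Prop :=
  ∀ (w : W) (u : S), ∃ K : ℤ, ∀ k : ℤ, K ≤ k → op u k w = 0

/-- The normally ordered quadratic mode
`(:uv:)(m) = Σ_{j<0} u(j)v(m-j) + Σ_{j≥0} v(m-j)u(j)` applied to a vector `w`;
on a locally annihilating system all but finitely many summands vanish, so the
`finsum` computes the intended (finite) sum. -/
def noMode {S W : Type*} [AddCommGroup W] [Module ℂ W]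
    (op : S → ℤ → Module.End ℂ W) (u v : S) (m : ℤ) (w : W) : W :=
  ∑ᶠ j : ℤ, if j < 0 then op u j (op v (m - j) w) else op v (m - j) (op u j w)

end

/-- The four symbols `b, b*, c, c*`. -/
inductive WSym4 : Type
  | b | bs | c | cs
deriving DecidableEq

/-- The pairing `⟨b,b*⟩ = ⟨c,c*⟩ = -1`, `⟨b*,b⟩ = ⟨c*,c⟩ = 1`, all other pairings `0`. -/
def pair4 : WSym4 → WSym4 → ℂ
  | .b, .bs => -1
  | .c, .cs => -1
  | .bs, .b => 1
  | .cs, .c => 1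
  | _, _ => 0

section
variable {W : Type*} [AddCommGroup W] [Module ℂ W] (op : WSym4 → ℤ → Module.End ℂ W)

/-- `X⁺(m) = √-1 (:bc*:)(m)` (applied to a vector). -/
noncomputable def Xplus (m : ℤ) (w : W) : W := Complex.I • noMode op .b .cs m w

/-- `X⁻(m) = √-1 (:b*c:)(m)` (applied to a vector). -/
noncomputable def Xminus (m : ℤ) (w : W) : W := Complex.I • noMode op .bs .c m w

/-- `α(m) = (:bb*:)(m) - (:cc*:)(m)` (applied to a vector). -/
noncomputable def alMode (m : ℤ) (w : W) : W := noMode op .b .bs m w - noMode op .c .cs m w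

end

/- ## Auxiliary development -/

noncomputable section Aux

open Function

variable {W : Type*} [AddCommGroup W] [Module ℂ W] {op : WSym4 → ℤ → Module.End ℂ W}

/-- The summand of `noMode`. -/
def nms (op : WSym4 → ℤ → Module.End ℂ W) (u v : WSym4) (m : ℤ) (w : W) (j : ℤ) : W :=
  if j < 0 then op u j (op v (m - j) w) else op v (m - j) (op u j w)

lemma noMode_eq (u v : WSym4) (m : ℤ) (w : W) :
    noMode op u v m w = ∑ᶠ j, nms op u v m w j := rfl

lemma nms_supp (hA : LocallyAnnihilating op) (u v : WSym4) (m : ℤ) (w : W) :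
    (support (nms op u v m w)).Finite := by
  obtain ⟨K1, h1⟩ := hA w u
  obtain ⟨K2, h2⟩ := hA w v
  apply Set.Finite.subset (Set.finite_Ioo (min (m - K2) (-1)) (max K1 0))
  intro j hj
  simp only [mem_support, nms] at hj
  simp only [Set.mem_Ioo]
  by_cases hneg : j < 0
  · rw [if_pos hneg] at hj
    have hmj : m - j < K2 := by
      by_contra h
      push_neg at h
      rw [h2 (m - j) h, map_zero] at hj
      exact hj rfl
    omega
  · rw [if_neg hneg] at hj
    have hjK : j < K1 := by
      by_contra h
      push_neg at h
      rw [h1 j h, map_zero] at hj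
      exact hj rfl
    omega

lemma weyl_apply (hW : IsBosonicWeylSystem pair4 op) (u v : WSym4) (k l : ℤ) (z : W) :
    op u k (op v l z) = op v l (op u k z) + (if k + l = 0 then pair4 u v • z else 0) := by
  have h := DFunLike.congr_fun (hW u v k l) z
  split_ifs at h ⊢ with hc
  · simp only [LinearMap.sub_apply, Module.End.mul_apply, LinearMap.smul_apply,
      Module.End.one_apply] at h
    rw [← h]; abel
  · simp only [LinearMap.sub_apply, Module.End.mul_apply, LinearMap.zero_apply] at h
    rw [← h]; abel

lemma ite_supp_finite {M : Type*} [Zero M] (a : ℤ) (x : M) :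
    (support fun j : ℤ => if j = a then x else 0).Finite := by
  apply Set.Finite.subset (Set.finite_singleton a)
  intro j hj
  simp only [mem_support] at hj
  by_contra h
  simp only [Set.mem_singleton_iff] at h
  rw [if_neg h] at hj
  exact hj rfl

/-- Commutator of a single mode with a normally ordered quadratic mode. -/
lemma mode_noMode (hW : IsBosonicWeylSystem pair4 op) (hA : LocallyAnnihilating op)
    (u x y : WSym4) (k n : ℤ) (w : W) :
    op u k (noMode op x y n w) - noMode op x y n (op u k w)
      = pair4 u x • op y (n + k) w + pair4 u y • op x (n + k) w := by
  have hF := nms_supp hA x y n w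
  have hF' := nms_supp hA x y n (op u k w)
  have hF2 : (support fun j => op u k (nms op x y n w j)).Finite := by
    apply hF.subset
    intro j hj
    simp only [mem_support] at hj ⊢
    intro h0
    rw [h0, map_zero] at hj
    exact hj rfl
  have hmap : op u k (∑ᶠ j, nms op x y n w j) = ∑ᶠ j, op u k (nms op x y n w j) :=
    AddMonoidHom.map_finsum (op u k).toAddMonoidHom hF
  rw [noMode_eq, noMode_eq, hmap, ← finsum_sub_distrib hF2 hF']
  have key : ∀ j : ℤ, op u k (nms op x y n w j) - nms op x y n (op u k w) j
      = (if j = -k then pair4 u x • op y (n + k) w else 0)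
        + (if j = n + k then pair4 u y • op x (n + k) w else 0) := by
    intro j
    unfold nms
    by_cases hneg : j < 0
    · rw [if_pos hneg, if_pos hneg,
        weyl_apply hW u x k j, weyl_apply hW u y k (n - j) w, map_add]
      by_cases h1 : k + j = 0
      · have hj : j = -k := by omega
        subst hj
        rw [if_pos h1]
        by_cases h2 : k + (n - -k) = 0
        · rw [if_pos h2, if_pos rfl, if_pos (show -k = n + k by omega)]
          simp only [map_smul, show n - -k = n + k from by ring]
          rw [show n + k = -k by omega]
          abel
        · rw [if_neg h2, if_pos rfl, if_neg (show ¬ -k = n + k by omega), map_zero]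
          simp only [show n - -k = n + k from by ring]
          abel
      · have hj : j ≠ -k := by omega
        rw [if_neg h1, if_neg hj]
        by_cases h2 : k + (n - j) = 0
        · have hj2 : j = n + k := by omega
          subst hj2
          rw [if_pos h2, if_pos rfl]
          simp only [map_smul]
          abel
        · have hj2 : j ≠ n + k := by omega
          rw [if_neg h2, if_neg hj2, map_zero]
          abel
    · rw [if_neg hneg, if_neg hneg,
        weyl_apply hW u y k (n - j) (op x j w), weyl_apply hW u x k j w, map_add]
      by_cases h1 : k + j = 0
      · have hj : j = -k := by omega
        subst hj
        rw [if_pos h1]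
        by_cases h2 : k + (n - -k) = 0
        · rw [if_pos h2, if_pos rfl, if_pos (show -k = n + k by omega)]
          simp only [map_smul, show n - -k = n + k from by ring]
          rw [show n + k = -k by omega]
          abel
        · rw [if_neg h2, if_pos rfl, if_neg (show ¬ -k = n + k by omega)]
          simp only [map_smul, show n - -k = n + k from by ring]
          abel
      · have hj : j ≠ -k := by omega
        rw [if_neg h1, if_neg hj, map_zero]
        by_cases h2 : k + (n - j) = 0
        · have hj2 : j = n + k := by omega
          subst hj2
          rw [if_pos h2, if_pos rfl]
          abel
        · have hj2 : j ≠ n + k := by omega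
          rw [if_neg h2, if_neg hj2]
          abel
  rw [finsum_congr key,
    finsum_add_distrib (ite_supp_finite (-k) _) (ite_supp_finite (n + k) _),
    finsum_eq_single _ (-k) (fun x hx => if_neg hx),
    finsum_eq_single _ (n + k) (fun x hx => if_neg hx), if_pos rfl, if_pos rfl]

lemma noMode_zero (u v : WSym4) (m : ℤ) : noMode op u v m (0 : W) = 0 := by
  rw [noMode_eq]
  have h : ∀ j : ℤ, nms op u v m (0 : W) j = 0 := by
    intro j; unfold nms; split <;> simp
  rw [finsum_congr h, finsum_zero]

lemma noMode_add (hA : LocallyAnnihilating op) (u v : WSym4) (m : ℤ) (w1 w2 : W) :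
    noMode op u v m (w1 + w2) = noMode op u v m w1 + noMode op u v m w2 := by
  rw [noMode_eq, noMode_eq, noMode_eq,
    ← finsum_add_distrib (nms_supp hA u v m w1) (nms_supp hA u v m w2)]
  refine finsum_congr fun j => ?_
  unfold nms
  split <;> simp

lemma noMode_smul (hA : LocallyAnnihilating op) (u v : WSym4) (m : ℤ) (c : ℂ) (w : W) :
    noMode op u v m (c • w) = c • noMode op u v m w := by
  rw [noMode_eq, noMode_eq, smul_finsum' c (nms_supp hA u v m w)]
  refine finsum_congr fun j => ?_
  unfold nms
  split <;> simp

lemma alMode_zero (m : ℤ) : alMode op m (0 : W) = 0 := by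
  simp [alMode, noMode_zero]

lemma alMode_add (hA : LocallyAnnihilating op) (m : ℤ) (w1 w2 : W) :
    alMode op m (w1 + w2) = alMode op m w1 + alMode op m w2 := by
  simp only [alMode, noMode_add hA]
  abel

lemma alMode_smul (hA : LocallyAnnihilating op) (m : ℤ) (c : ℂ) (w : W) :
    alMode op m (c • w) = c • alMode op m w := by
  simp only [alMode, noMode_smul hA, smul_sub]

/-- `alMode` as an additive monoid hom. -/
def alHom (op : WSym4 → ℤ → Module.End ℂ W) (hA : LocallyAnnihilating op) (m : ℤ) :
    W →+ W where
  toFun := alMode op m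
  map_zero' := alMode_zero m
  map_add' := alMode_add hA m

/-- Commutator of `alMode` with a single mode, in terms of the pairing. -/
lemma alMode_mode (hW : IsBosonicWeylSystem pair4 op) (hA : LocallyAnnihilating op)
    (u : WSym4) (m k : ℤ) (z : W) :
    alMode op m (op u k z) - op u k (alMode op m z)
      = -(pair4 u .b • op .bs (m + k) z + pair4 u .bs • op .b (m + k) z)
        + (pair4 u .c • op .cs (m + k) z + pair4 u .cs • op .c (m + k) z) := by
  have h1 := mode_noMode hW hA u .b .bs k m z
  have h2 := mode_noMode hW hA u .c .cs k m z
  simp only [alMode, map_sub]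
  rw [← h1, ← h2]
  abel

/-- Key general lemma: commutator of `alMode` with a quadratic `noMode x y n`, assuming
the `x`- and `y`-modes commute and `alMode` has the same "charge" `c` on both. -/
lemma quad_comm (hW : IsBosonicWeylSystem pair4 op) (hA : LocallyAnnihilating op)
    (x y : WSym4) (hxy : pair4 x y = 0) (hyx : pair4 y x = 0) (m n : ℤ) (c : ℂ)
    (hx : ∀ (k : ℤ) (z : W), alMode op m (op x k z) - op x k (alMode op m z)
      = c • op x (m + k) z)
    (hy : ∀ (l : ℤ) (z : W), alMode op m (op y l z) - op y l (alMode op m z)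
      = c • op y (m + l) z)
    (w : W) :
    alMode op m (noMode op x y n w) - noMode op x y n (alMode op m w)
      = (2 * c) • noMode op x y (m + n) w := by
  have hcomm : ∀ (k l : ℤ) (z : W), op x k (op y l z) = op y l (op x k z) := by
    intro k l z
    rw [weyl_apply hW x y k l z, hxy]
    split <;> simp
  set G : ℤ → W := fun j => op x j (op y (m + n - j) w) with hG
  have hGfin : (support G).Finite := by
    obtain ⟨K1, h1⟩ := hA w x
    obtain ⟨K2, h2⟩ := hA w y
    apply Set.Finite.subset (Set.finite_Ioo (m + n - K2) K1)
    intro j hj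
    simp only [mem_support, hG] at hj
    simp only [Set.mem_Ioo]
    constructor
    · by_contra h
      push_neg at h
      rw [h2 (m + n - j) (by omega), map_zero] at hj
      exact hj rfl
    · by_contra h
      push_neg at h
      rw [hcomm, h1 j h, map_zero] at hj
      exact hj rfl
  have hGmfin : (support fun j => G (m + j)).Finite := by
    have : (support fun j => G (m + j)) = (fun j => m + j) ⁻¹' (support G) := by
      ext j; simp [mem_support]
    rw [this]
    exact hGfin.preimage (fun a _ b _ h => by omega)
  have hF := nms_supp hA x y n w
  have hF' := nms_supp hA x y n (alMode op m w)
  have hF2 : (support fun j => alMode op m (nms op x y n w j)).Finite := by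
    apply hF.subset
    intro j hj
    simp only [mem_support] at hj ⊢
    intro h0
    rw [h0, alMode_zero] at hj
    exact hj rfl
  have hmap : alMode op m (∑ᶠ j, nms op x y n w j)
      = ∑ᶠ j, alMode op m (nms op x y n w j) :=
    AddMonoidHom.map_finsum (alHom op hA m) hF
  rw [noMode_eq, noMode_eq, hmap, ← finsum_sub_distrib hF2 hF']
  have key : ∀ j : ℤ, alMode op m (nms op x y n w j) - nms op x y n (alMode op m w) j
      = c • G (m + j) + c • G j := by
    intro j
    have hxe : ∀ (k : ℤ) (z : W),
        alMode op m (op x k z) = op x k (alMode op m z) + c • op x (m + k) z := by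
      intro k z
      have := hx k z
      rw [sub_eq_iff_eq_add] at this
      rw [this]; abel
    have hye : ∀ (l : ℤ) (z : W),
        alMode op m (op y l z) = op y l (alMode op m z) + c • op y (m + l) z := by
      intro l z
      have := hy l z
      rw [sub_eq_iff_eq_add] at this
      rw [this]; abel
    unfold nms
    by_cases hneg : j < 0
    · rw [if_pos hneg, if_pos hneg, hxe j (op y (n - j) w), hye (n - j) w, map_add,
        map_smul]
      simp only [hG]
      rw [show m + n - (m + j) = n - j by ring, show m + (n - j) = m + n - j by ring,
        hcomm (m + j) (n - j) w]
      abel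
    · rw [if_neg hneg, if_neg hneg, hye (n - j) (op x j w), hxe j w, map_add, map_smul]
      simp only [hG]
      rw [show m + n - (m + j) = n - j by ring, show m + (n - j) = m + n - j by ring,
        hcomm (m + j) (n - j) w, hcomm j (m + n - j) w]
      abel
  rw [finsum_congr key]
  have hc1 : (support fun j => c • G (m + j)).Finite :=
    hGmfin.subset (fun j hj => by
      simp only [mem_support] at hj ⊢
      intro h0; rw [h0, smul_zero] at hj; exact hj rfl)
  have hc2 : (support fun j => c • G j).Finite :=
    hGfin.subset (fun j hj => by
      simp only [mem_support] at hj ⊢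
      intro h0; rw [h0, smul_zero] at hj; exact hj rfl)
  rw [finsum_add_distrib hc1 hc2, ← smul_finsum' c hGmfin, ← smul_finsum' c hGfin]
  have hshift : (∑ᶠ j, G (m + j)) = ∑ᶠ j, G j := finsum_comp_equiv (Equiv.addLeft m)
  have hno : noMode op x y (m + n) w = ∑ᶠ j, G j := by
    rw [noMode_eq]
    refine finsum_congr fun j => ?_
    unfold nms
    split
    · rfl
    · exact (hcomm j (m + n - j) w).symm
  rw [hshift, hno, ← add_smul]
  congr 1
  ring

/- ## Charges of the individual modes -/

lemma charge_b (hW : IsBosonicWeylSystem pair4 op) (hA : LocallyAnnihilating op)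
    (m : ℤ) : ∀ (k : ℤ) (z : W),
    alMode op m (op .b k z) - op .b k (alMode op m z) = (1 : ℂ) • op .b (m + k) z := by
  intro k z
  rw [alMode_mode hW hA .b m k z]
  simp only [show pair4 .b .b = 0 from rfl, show pair4 .b .bs = -1 from rfl,
    show pair4 .b .c = 0 from rfl, show pair4 .b .cs = 0 from rfl]
  simp

lemma charge_cs (hW : IsBosonicWeylSystem pair4 op) (hA : LocallyAnnihilating op)
    (m : ℤ) : ∀ (k : ℤ) (z : W),
    alMode op m (op .cs k z) - op .cs k (alMode op m z) = (1 : ℂ) • op .cs (m + k) z := by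
  intro k z
  rw [alMode_mode hW hA .cs m k z]
  simp only [show pair4 .cs .b = 0 from rfl, show pair4 .cs .bs = 0 from rfl,
    show pair4 .cs .c = 1 from rfl, show pair4 .cs .cs = 0 from rfl]
  simp

lemma charge_bs (hW : IsBosonicWeylSystem pair4 op) (hA : LocallyAnnihilating op)
    (m : ℤ) : ∀ (k : ℤ) (z : W),
    alMode op m (op .bs k z) - op .bs k (alMode op m z) = (-1 : ℂ) • op .bs (m + k) z := by
  intro k z
  rw [alMode_mode hW hA .bs m k z]
  simp only [show pair4 .bs .b = 1 from rfl, show pair4 .bs .bs = 0 from rfl,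
    show pair4 .bs .c = 0 from rfl, show pair4 .bs .cs = 0 from rfl]
  simp

lemma charge_c (hW : IsBosonicWeylSystem pair4 op) (hA : LocallyAnnihilating op)
    (m : ℤ) : ∀ (k : ℤ) (z : W),
    alMode op m (op .c k z) - op .c k (alMode op m z) = (-1 : ℂ) • op .c (m + k) z := by
  intro k z
  rw [alMode_mode hW hA .c m k z]
  simp only [show pair4 .c .b = 0 from rfl, show pair4 .c .bs = 0 from rfl,
    show pair4 .c .c = 0 from rfl, show pair4 .c .cs = -1 from rfl]
  simp

end Aux

/-- for a locally annihilating bosonic Weyl system `{b, b*, c, c*}` as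
above, `[α(m), X⁺(n)] = 2 X⁺(m+n)` and `[α(m), X⁻(n)] = -2 X⁻(m+n)` (mode form of
`[α_i(z), x_i^±(w)] = ±(α_i,α_i) x_i^±(w) δ(z-w)` with `(α_i,α_i) = 2`). -/
theorem alMode_Xpm_commutator {W : Type*} [AddCommGroup W] [Module ℂ W]
    (op : WSym4 → ℤ → Module.End ℂ W)
    (hW : IsBosonicWeylSystem pair4 op) (hA : LocallyAnnihilating op)
    (m n : ℤ) (w : W) :
    alMode op m (Xplus op n w) - Xplus op n (alMode op m w) = (2 : ℂ) • Xplus op (m + n) w ∧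
    alMode op m (Xminus op n w) - Xminus op n (alMode op m w) =
      (-2 : ℂ) • Xminus op (m + n) w := by
  constructor
  · have h := quad_comm hW hA .b .cs rfl rfl m n 1
      (charge_b hW hA m) (charge_cs hW hA m) w
    simp only [Xplus]
    rw [alMode_smul hA, ← smul_sub, h, smul_smul, smul_smul]
    congr 1
    ring
  · have h := quad_comm hW hA .bs .c rfl rfl m n (-1)
      (charge_bs hW hA m) (charge_c hW hA m) w
    simp only [Xminus]
    rw [alMode_smul hA, ← smul_sub, h, smul_smul, smul_smul]
    congr 1
    ring
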